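/- The primal LP defining the Kantorovich lifting and its dual have equal optimal values: for any premetric μ on S and finite subdistributions D, E, the minimum of Σ h_{i,j} μ(s_i,s_j) + Σ w_i + Σ z_j subject to the marginal constraints equals the maximum of Σ_s a_s D(s) + b_s E(s) subject to a_s ≤ 1, b_s ≤ 1, and a_s + b_t ≤ μ(s,t). -/

import Mathlib

noncomputable section
open Classical

/-- A premetric on `S`: a `[0,1]`-valued function vanishing on the diagonal. -/
def IsPremetric {S : Type*} (μ : S → S → ℝ) : Prop :=
  (∀ s t, 0 ≤ μ s t) ∧ (∀ s t, μ s t ≤ 1) ∧ ∀ s, μ s s = 0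

/-- A finite subdistribution on `S`: nonnegative, finitely supported, total mass ≤ 1. -/
def IsSubdist {S : Type*} (D : S →₀ ℝ) : Prop :=
  (∀ s, 0 ≤ D s) ∧ D.sum (fun _ p => p) ≤ 1

/-- The dual (LP) formulation of the Kantorovich lifting of `μ` to finite
subdistributions: the maximum of `Σ_s a_s D(s) + b_s E(s)` subject to
`a_s ≤ 1`, `b_s ≤ 1`, and `a_s + b_t ≤ μ(s,t)`. -/
def dualLift {S : Type*} (μ : S → S → ℝ) (D E : S →₀ ℝ) : ℝ :=
  sSup {r | ∃ a b : S → ℝ,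
    (∀ s, a s ≤ 1) ∧ (∀ s, b s ≤ 1) ∧ (∀ s t, a s + b t ≤ μ s t) ∧
    r = D.sum (fun s p => a s * p) + E.sum (fun s p => b s * p)}

/-- The primal (LP) formulation of the Kantorovich lifting of `μ`: the minimum
of `Σ h_{s,t} μ(s,t) + Σ w_s + Σ z_t` subject to the marginal constraints. -/
def primLift {S : Type*} (μ : S → S → ℝ) (D E : S →₀ ℝ) : ℝ :=
  sInf {r | ∃ (h : S → S → ℝ) (w z : S → ℝ),
    (∀ s t, 0 ≤ h s t) ∧ (∀ s, 0 ≤ w s) ∧ (∀ s, 0 ≤ z s) ∧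
    (∀ t ∈ E.support, (∑ s ∈ D.support, h s t) + z t = E t) ∧
    (∀ s ∈ D.support, (∑ t ∈ E.support, h s t) + w s = D s) ∧
    r = (∑ s ∈ D.support, ∑ t ∈ E.support, h s t * μ s t) +
        (∑ s ∈ D.support, w s) + (∑ t ∈ E.support, z t)}

namespace LPDualAux

open RealInnerProductSpace

/-! ### Generic Euclidean space facts -/

/-- The nonnegative orthant as a proper cone. -/
def posCone (ι : Type*) [Fintype ι] : ProperCone ℝ (EuclideanSpace ℝ ι) where
  toSubmodule :=
  { carrier := {x | ∀ i, 0 ≤ x i}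
    add_mem' := fun hx hy i => add_nonneg (hx i) (hy i)
    zero_mem' := fun i => le_refl 0
    smul_mem' := fun c x hx i => by
      have : (c • x) i = (c : ℝ) * x i := rfl
      rw [this]; exact mul_nonneg c.2 (hx i) }
  isClosed' := by
    show IsClosed {x : EuclideanSpace ℝ ι | ∀ i, 0 ≤ x i}
    have : {x : EuclideanSpace ℝ ι | ∀ i, 0 ≤ x i}
        = ⋂ i, (fun x : EuclideanSpace ℝ ι => x i) ⁻¹' Set.Ici 0 := by
      ext x; simp [Set.mem_iInter]
    rw [this]
    exact isClosed_iInter fun i => IsClosed.preimage (PiLp.continuous_apply 2 _ i) isClosed_Ici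

theorem mem_posCone {ι : Type*} [Fintype ι] (x : EuclideanSpace ℝ ι) :
    x ∈ posCone ι ↔ ∀ i, 0 ≤ x i := Iff.rfl

theorem compactBox {ι : Type*} [Fintype ι] (c : ℝ) :
    IsCompact {x : EuclideanSpace ℝ ι | ∀ i, x i ∈ Set.Icc 0 c} := by
  have h : {x : EuclideanSpace ℝ ι | ∀ i, x i ∈ Set.Icc 0 c}
      = (EuclideanSpace.equiv ι ℝ).toHomeomorph ⁻¹' (Set.univ.pi fun _ => Set.Icc 0 c) := by
    ext x
    constructor
    · intro hx i _; exact hx i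
    · intro hx i; exact hx i (Set.mem_univ i)
  rw [h, Homeomorph.isCompact_preimage]
  exact isCompact_univ_pi fun _ => isCompact_Icc

theorem coord_le_norm {κ : Type*} [Fintype κ] (x : EuclideanSpace ℝ κ) (k : κ) :
    |x k| ≤ ‖x‖ := by
  rw [EuclideanSpace.norm_eq, ← Real.sqrt_sq_eq_abs]
  apply Real.sqrt_le_sqrt
  calc x k ^ 2 = ‖x k‖ ^ 2 := by rw [Real.norm_eq_abs, sq_abs]
  _ ≤ ∑ i, ‖x i‖ ^ 2 :=
    Finset.single_le_sum (f := fun i => ‖x i‖ ^ 2) (fun i _ => sq_nonneg _) (Finset.mem_univ k)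

theorem single_nonneg_coords {ι : Type*} [Fintype ι] (i j : ι) :
    0 ≤ EuclideanSpace.single i (1:ℝ) j := by
  rw [EuclideanSpace.single_apply]
  split <;> norm_num

/-! ### The constraint matrix of the primal LP -/

variable {S : Type*}

abbrev Idx (D E : S →₀ ℝ) : Type _ :=
  ({s // s ∈ D.support} × {t // t ∈ E.support}) ⊕
    ({s // s ∈ D.support} ⊕ ({t // t ∈ E.support} ⊕ Unit))

abbrev Out (D E : S →₀ ℝ) : Type _ :=
  {s // s ∈ D.support} ⊕ ({t // t ∈ E.support} ⊕ Unit)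

def lmap (μ : S → S → ℝ) (D E : S →₀ ℝ) :
    EuclideanSpace ℝ (Idx D E) →ₗ[ℝ] EuclideanSpace ℝ (Out D E) where
  toFun x := WithLp.toLp 2 fun k =>
    match k with
    | .inl s => (∑ t : {t // t ∈ E.support}, x (.inl (s, t))) + x (.inr (.inl s))
    | .inr (.inl t) => (∑ s : {s // s ∈ D.support}, x (.inl (s, t))) + x (.inr (.inr (.inl t)))
    | .inr (.inr _) =>
        (∑ q : {s // s ∈ D.support} × {t // t ∈ E.support}, μ q.1.1 q.2.1 * x (.inl q))
          + (∑ s : {s // s ∈ D.support}, x (.inr (.inl s)))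
          + (∑ t : {t // t ∈ E.support}, x (.inr (.inr (.inl t))))
          + x (.inr (.inr (.inr ())))
  map_add' x y := by
    ext k
    match k with
    | .inl s => simp [PiLp.add_apply, Finset.sum_add_distrib]; ring
    | .inr (.inl t) => simp [PiLp.add_apply, Finset.sum_add_distrib]; ring
    | .inr (.inr _) => simp [PiLp.add_apply, Finset.sum_add_distrib, mul_add]; ring
  map_smul' c x := by
    ext k
    match k with
    | .inl s => simp [PiLp.smul_apply, smul_eq_mul, Finset.mul_sum, mul_add,
        mul_comm, mul_left_comm, mul_assoc]
    | .inr (.inl t) => simp [PiLp.smul_apply, smul_eq_mul, Finset.mul_sum, mul_add,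
        mul_comm, mul_left_comm, mul_assoc]
    | .inr (.inr _) => simp [PiLp.smul_apply, smul_eq_mul, Finset.mul_sum, mul_add,
        mul_comm, mul_left_comm, mul_assoc]

def cmap (μ : S → S → ℝ) (D E : S →₀ ℝ) :
    EuclideanSpace ℝ (Idx D E) →L[ℝ] EuclideanSpace ℝ (Out D E) :=
  LinearMap.toContinuousLinearMap (lmap μ D E)

@[simp] theorem cmap_apply_inl (μ : S → S → ℝ) (D E : S →₀ ℝ)
    (x : EuclideanSpace ℝ (Idx D E)) (s : {s // s ∈ D.support}) :
    cmap μ D E x (.inl s) =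
      (∑ t : {t // t ∈ E.support}, x (.inl (s, t))) + x (.inr (.inl s)) := rfl

@[simp] theorem cmap_apply_inr_inl (μ : S → S → ℝ) (D E : S →₀ ℝ)
    (x : EuclideanSpace ℝ (Idx D E)) (t : {t // t ∈ E.support}) :
    cmap μ D E x (.inr (.inl t)) =
      (∑ s : {s // s ∈ D.support}, x (.inl (s, t))) + x (.inr (.inr (.inl t))) := rfl

@[simp] theorem cmap_apply_last (μ : S → S → ℝ) (D E : S →₀ ℝ)
    (x : EuclideanSpace ℝ (Idx D E)) (u : Unit) :
    cmap μ D E x (.inr (.inr u)) =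
      (∑ q : {s // s ∈ D.support} × {t // t ∈ E.support}, μ q.1.1 q.2.1 * x (.inl q))
        + (∑ s : {s // s ∈ D.support}, x (.inr (.inl s)))
        + (∑ t : {t // t ∈ E.support}, x (.inr (.inr (.inl t))))
        + x (.inr (.inr (.inr ()))) := rfl

theorem inner_out (D E : S →₀ ℝ) (v y : EuclideanSpace ℝ (Out D E)) :
    ⟪v, y⟫ = (∑ s : {s // s ∈ D.support}, v (.inl s) * y (.inl s))
      + (∑ t : {t // t ∈ E.support}, v (.inr (.inl t)) * y (.inr (.inl t)))
      + v (.inr (.inr ())) * y (.inr (.inr ())) := by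
  simp [PiLp.inner_apply, RCLike.inner_apply, conj_trivial, Fintype.sum_sum_type]
  simp only [mul_comm (y.ofLp _)]
  ring

theorem inner_cmap (μ : S → S → ℝ) (D E : S →₀ ℝ)
    (x : EuclideanSpace ℝ (Idx D E)) (y : EuclideanSpace ℝ (Out D E)) :
    ⟪cmap μ D E x, y⟫ =
      (∑ q : {s // s ∈ D.support} × {t // t ∈ E.support},
        x (.inl q) * (y (.inl q.1) + y (.inr (.inl q.2)) + y (.inr (.inr ())) * μ q.1.1 q.2.1))
      + (∑ s : {s // s ∈ D.support}, x (.inr (.inl s)) * (y (.inl s) + y (.inr (.inr ()))))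
      + (∑ t : {t // t ∈ E.support},
          x (.inr (.inr (.inl t))) * (y (.inr (.inl t)) + y (.inr (.inr ()))))
      + x (.inr (.inr (.inr ()))) * y (.inr (.inr ())) := by
  rw [inner_out]
  simp only [cmap_apply_inl, cmap_apply_inr_inl, cmap_apply_last]
  simp only [add_mul, mul_add, Finset.sum_mul, Finset.mul_sum, Finset.sum_add_distrib,
    Fintype.sum_prod_type]
  rw [Finset.sum_comm (f := fun s t => x (Sum.inl (s, t)) * y (Sum.inr (Sum.inl t)))]
  have hswap : ∀ c : ℝ, (∑ s : {s // s ∈ D.support}, ∑ t : {t // t ∈ E.support},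
      μ ↑s ↑t * x (Sum.inl (s, t)) * c)
      = ∑ s : {s // s ∈ D.support}, ∑ t : {t // t ∈ E.support},
        x (Sum.inl (s, t)) * c * μ ↑s ↑t := fun c =>
    Finset.sum_congr rfl fun _ _ => Finset.sum_congr rfl fun _ _ => by ring
  rw [hswap]
  ring_nf
  simp only [mul_comm (y.ofLp (Sum.inr (Sum.inr ())))]
  ring

theorem inner_cmap_single_h (μ : S → S → ℝ) (D E : S →₀ ℝ) (y : EuclideanSpace ℝ (Out D E))
    (q₀ : {s // s ∈ D.support} × {t // t ∈ E.support}) :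
    ⟪cmap μ D E (EuclideanSpace.single (Sum.inl q₀) 1), y⟫
      = y (.inl q₀.1) + y (.inr (.inl q₀.2)) + y (.inr (.inr ())) * μ q₀.1.1 q₀.2.1 := by
  rw [inner_cmap]
  simp [EuclideanSpace.single_apply, Finset.sum_ite_eq', ite_mul]

theorem inner_cmap_single_w (μ : S → S → ℝ) (D E : S →₀ ℝ) (y : EuclideanSpace ℝ (Out D E))
    (s₀ : {s // s ∈ D.support}) :
    ⟪cmap μ D E (EuclideanSpace.single (Sum.inr (Sum.inl s₀)) 1), y⟫
      = y (.inl s₀) + y (.inr (.inr ())) := by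
  rw [inner_cmap]
  simp [EuclideanSpace.single_apply, Finset.sum_ite_eq', ite_mul]

theorem inner_cmap_single_z (μ : S → S → ℝ) (D E : S →₀ ℝ) (y : EuclideanSpace ℝ (Out D E))
    (t₀ : {t // t ∈ E.support}) :
    ⟪cmap μ D E (EuclideanSpace.single (Sum.inr (Sum.inr (Sum.inl t₀))) 1), y⟫
      = y (.inr (.inl t₀)) + y (.inr (.inr ())) := by
  rw [inner_cmap]
  simp [EuclideanSpace.single_apply, Finset.sum_ite_eq', ite_mul]

theorem inner_cmap_single_u (μ : S → S → ℝ) (D E : S →₀ ℝ) (y : EuclideanSpace ℝ (Out D E)) :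
    ⟪cmap μ D E (EuclideanSpace.single (Sum.inr (Sum.inr (Sum.inr ()))) 1), y⟫
      = y (.inr (.inr ())) := by
  rw [inner_cmap]
  simp [EuclideanSpace.single_apply, Finset.sum_ite_eq', ite_mul]

/-! ### Feasible sets -/

def dualSet (μ : S → S → ℝ) (D E : S →₀ ℝ) : Set ℝ :=
  {r | ∃ a b : S → ℝ,
    (∀ s, a s ≤ 1) ∧ (∀ s, b s ≤ 1) ∧ (∀ s t, a s + b t ≤ μ s t) ∧
    r = D.sum (fun s p => a s * p) + E.sum (fun s p => b s * p)}

def primSet (μ : S → S → ℝ) (D E : S →₀ ℝ) : Set ℝ :=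
  {r | ∃ (h : S → S → ℝ) (w z : S → ℝ),
    (∀ s t, 0 ≤ h s t) ∧ (∀ s, 0 ≤ w s) ∧ (∀ s, 0 ≤ z s) ∧
    (∀ t ∈ E.support, (∑ s ∈ D.support, h s t) + z t = E t) ∧
    (∀ s ∈ D.support, (∑ t ∈ E.support, h s t) + w s = D s) ∧
    r = (∑ s ∈ D.support, ∑ t ∈ E.support, h s t * μ s t) +
        (∑ s ∈ D.support, w s) + (∑ t ∈ E.support, z t)}

theorem weak_duality {μ : S → S → ℝ} {D E : S →₀ ℝ} {r r' : ℝ}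
    (hr : r ∈ primSet μ D E) (hr' : r' ∈ dualSet μ D E) : r' ≤ r := by
  obtain ⟨h, w, z, hh, hw, hz, hcE, hcD, hrr⟩ := hr
  obtain ⟨a, b, ha, hb, hab, hrr'⟩ := hr'
  have e1 : D.sum (fun s p => a s * p)
      = ∑ s ∈ D.support, a s * ((∑ t ∈ E.support, h s t) + w s) := by
    rw [Finsupp.sum]
    exact Finset.sum_congr rfl fun s hs => by rw [hcD s hs]
  have e2 : E.sum (fun t p => b t * p)
      = ∑ t ∈ E.support, b t * ((∑ s ∈ D.support, h s t) + z t) := by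
    rw [Finsupp.sum]
    exact Finset.sum_congr rfl fun t ht => by rw [hcE t ht]
  have expand : D.sum (fun s p => a s * p) + E.sum (fun t p => b t * p)
      = (∑ s ∈ D.support, ∑ t ∈ E.support, (a s + b t) * h s t)
        + (∑ s ∈ D.support, a s * w s) + (∑ t ∈ E.support, b t * z t) := by
    rw [e1, e2]
    simp only [mul_add, Finset.mul_sum, Finset.sum_add_distrib, add_mul]
    rw [Finset.sum_comm (s := E.support) (t := D.support)
      (f := fun t s => b t * h s t)]
    ring
  rw [hrr', hrr, expand]
  have t1 : (∑ s ∈ D.support, ∑ t ∈ E.support, (a s + b t) * h s t)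
      ≤ ∑ s ∈ D.support, ∑ t ∈ E.support, h s t * μ s t := by
    refine Finset.sum_le_sum fun s _ => Finset.sum_le_sum fun t _ => ?_
    rw [mul_comm (h s t)]
    exact mul_le_mul_of_nonneg_right (hab s t) (hh s t)
  have t2 : (∑ s ∈ D.support, a s * w s) ≤ ∑ s ∈ D.support, w s :=
    Finset.sum_le_sum fun s _ => by
      calc a s * w s ≤ 1 * w s := mul_le_mul_of_nonneg_right (ha s) (hw s)
      _ = w s := one_mul _
  have t3 : (∑ t ∈ E.support, b t * z t) ≤ ∑ t ∈ E.support, z t :=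
    Finset.sum_le_sum fun t _ => by
      calc b t * z t ≤ 1 * z t := mul_le_mul_of_nonneg_right (hb t) (hz t)
      _ = z t := one_mul _
  exact add_le_add (add_le_add t1 t2) t3

theorem prim_nonempty (μ : S → S → ℝ) (D E : S →₀ ℝ) (hD : IsSubdist D) (hE : IsSubdist E) :
    ((∑ s ∈ D.support, D s) + (∑ t ∈ E.support, E t)) ∈ primSet μ D E := by
  refine ⟨fun _ _ => 0, fun s => D s, fun t => E t, fun _ _ => le_refl 0, fun s => hD.1 s,
    fun t => hE.1 t, fun t _ => by simp, fun s _ => by simp, by simp⟩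

theorem prim_nonneg {μ : S → S → ℝ} {D E : S →₀ ℝ} (hμ : IsPremetric μ) {r : ℝ}
    (hr : r ∈ primSet μ D E) : 0 ≤ r := by
  obtain ⟨h, w, z, hh, hw, hz, _, _, hrr⟩ := hr
  have h1 : 0 ≤ ∑ s ∈ D.support, ∑ t ∈ E.support, h s t * μ s t :=
    Finset.sum_nonneg fun s _ => Finset.sum_nonneg fun t _ =>
      mul_nonneg (hh s t) (hμ.1 s t)
  have h2 : 0 ≤ ∑ s ∈ D.support, w s := Finset.sum_nonneg fun s _ => hw s
  have h3 : 0 ≤ ∑ t ∈ E.support, z t := Finset.sum_nonneg fun t _ => hz t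
  rw [hrr]; positivity

theorem dual_nonempty {μ : S → S → ℝ} (hμ : IsPremetric μ) (D E : S →₀ ℝ) :
    (0 : ℝ) ∈ dualSet μ D E := by
  refine ⟨fun _ => 0, fun _ => 0, fun _ => zero_le_one, fun _ => zero_le_one,
    fun s t => by simpa using hμ.1 s t, by simp⟩


theorem exists_dual_near (μ : S → S → ℝ) (D E : S →₀ ℝ) (hμ : IsPremetric μ)
    (hD : IsSubdist D) (hE : IsSubdist E) {ε : ℝ} (hε : 0 < ε) :
    ∃ r' ∈ dualSet μ D E, sInf (primSet μ D E) - ε < r' := by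
  set p := sInf (primSet μ D E) with hp
  have hbdd : BddBelow (primSet μ D E) := ⟨0, fun r hr => prim_nonneg hμ hr⟩
  set b : EuclideanSpace ℝ (Out D E) :=
    WithLp.toLp 2 (Sum.elim (fun s => D s.1) (Sum.elim (fun t => E t.1) (fun _ => p - ε)) :
      Out D E → ℝ) with hbdef
  -- Step A : `b` is not in the (closed) image of the positive cone.
  have hbnot : b ∉ (posCone (Idx D E)).map (cmap μ D E) := by
    intro hb
    rw [ProperCone.mem_map, PointedCone.mem_closure, mem_closure_iff_seq_limit] at hb
    obtain ⟨seq, hmem, hlim⟩ := hb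
    have hmem' : ∀ n, ∃ x, (∀ i, 0 ≤ x i) ∧ cmap μ D E x = seq n := by
      intro n
      have h2 := hmem n
      rw [PointedCone.coe_map] at h2
      obtain ⟨x, hx, hfx⟩ := h2
      exact ⟨x, hx, hfx⟩
    choose x hxpos hfx using hmem'
    obtain ⟨c, hc⟩ := (hlim.norm).bddAbove_range
    have hcmem : ∀ n, ‖seq n‖ ≤ c := fun n => hc (Set.mem_range_self n)
    have hkey : ∀ (n : ℕ) (k : Out D E), seq n k ≤ max c 0 := fun n k =>
      le_trans (le_trans (le_trans (le_abs_self _) (coord_le_norm _ _)) (hcmem n))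
        (le_max_left c 0)
    have hbox : ∀ n, x n ∈ {v : EuclideanSpace ℝ (Idx D E) | ∀ i, v i ∈ Set.Icc 0 (max c 0)} := by
      intro n i
      refine ⟨hxpos n i, ?_⟩
      have hfxn := hfx n
      match i with
      | .inl (s, t) =>
          have h1 : x n (.inl (s, t)) ≤ cmap μ D E (x n) (.inl s) := by
            rw [cmap_apply_inl]
            have h0 : x n (.inl (s, t)) ≤ ∑ t' : {t // t ∈ E.support}, x n (.inl (s, t')) :=
              Finset.single_le_sum (f := fun t' => x n (.inl (s, t')))
                (fun t' _ => hxpos n _) (Finset.mem_univ t)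
            exact le_trans h0 (le_add_of_nonneg_right (hxpos n _))
          exact le_trans h1 (by rw [hfxn]; exact hkey n _)
      | .inr (.inl s) =>
          have h1 : x n (.inr (.inl s)) ≤ cmap μ D E (x n) (.inl s) := by
            rw [cmap_apply_inl]
            exact le_add_of_nonneg_left (Finset.sum_nonneg fun t' _ => hxpos n _)
          exact le_trans h1 (by rw [hfxn]; exact hkey n _)
      | .inr (.inr (.inl t)) =>
          have h1 : x n (.inr (.inr (.inl t))) ≤ cmap μ D E (x n) (.inr (.inl t)) := by
            rw [cmap_apply_inr_inl]
            exact le_add_of_nonneg_left (Finset.sum_nonneg fun s' _ => hxpos n _)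
          exact le_trans h1 (by rw [hfxn]; exact hkey n _)
      | .inr (.inr (.inr u)) =>
          have h1 : x n (.inr (.inr (.inr u))) ≤ cmap μ D E (x n) (.inr (.inr u)) := by
            rw [cmap_apply_last]
            have n1 : 0 ≤ ∑ q : {s // s ∈ D.support} × {t // t ∈ E.support},
                μ q.1.1 q.2.1 * x n (.inl q) :=
              Finset.sum_nonneg fun q _ => mul_nonneg (hμ.1 _ _) (hxpos n _)
            have n2 : 0 ≤ ∑ s : {s // s ∈ D.support}, x n (.inr (.inl s)) :=
              Finset.sum_nonneg fun s _ => hxpos n _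
            have n3 : 0 ≤ ∑ t : {t // t ∈ E.support}, x n (.inr (.inr (.inl t))) :=
              Finset.sum_nonneg fun t _ => hxpos n _
            have : x n (.inr (.inr (.inr u))) = x n (.inr (.inr (.inr ()))) := rfl
            rw [this]
            linarith
          exact le_trans h1 (by rw [hfxn]; exact hkey n _)
    obtain ⟨a, haBox, φ, hφmono, hconv⟩ := (compactBox (max c 0)).tendsto_subseq hbox
    have hapos : ∀ i, 0 ≤ a i := fun i => (haBox i).1
    have hfa : cmap μ D E a = b := by
      have h1 : Filter.Tendsto (fun m => cmap μ D E (x (φ m))) Filter.atTop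
          (nhds (cmap μ D E a)) := ((cmap μ D E).continuous.tendsto a).comp hconv
      have h2 : Filter.Tendsto (fun m => cmap μ D E (x (φ m))) Filter.atTop (nhds b) := by
        have h3 := hlim.comp (hφmono.tendsto_atTop)
        have h4 : (seq ∘ φ) = fun m => cmap μ D E (x (φ m)) := by
          funext m; exact (hfx (φ m)).symm
        rwa [h4] at h3
      exact tendsto_nhds_unique h1 h2
    -- build a primal feasible point of value `≤ p - ε`
    set h' : S → S → ℝ := fun s t =>
      if hs : s ∈ D.support then if ht : t ∈ E.support then
        a (.inl (⟨s, hs⟩, ⟨t, ht⟩)) else 0 else 0 with hh'def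
    set w' : S → ℝ := fun s =>
      if hs : s ∈ D.support then a (.inr (.inl ⟨s, hs⟩)) else 0 with hw'def
    set z' : S → ℝ := fun t =>
      if ht : t ∈ E.support then a (.inr (.inr (.inl ⟨t, ht⟩))) else 0 with hz'def
    have hh'nonneg : ∀ s t, 0 ≤ h' s t := by
      intro s t; rw [hh'def]; dsimp only
      split
      · split
        · exact hapos _
        · exact le_refl 0
      · exact le_refl 0
    have hw'nonneg : ∀ s, 0 ≤ w' s := by
      intro s; rw [hw'def]; dsimp only
      split
      · exact hapos _
      · exact le_refl 0
    have hz'nonneg : ∀ t, 0 ≤ z' t := by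
      intro t; rw [hz'def]; dsimp only
      split
      · exact hapos _
      · exact le_refl 0
    have hfa' : ∀ k, cmap μ D E a k = b k := fun k => by rw [hfa]
    have hsumh : ∀ (t : S) (ht : t ∈ E.support),
        (∑ s ∈ D.support, h' s t) = ∑ s : {s // s ∈ D.support}, a (.inl (s, ⟨t, ht⟩)) := by
      intro t ht
      rw [← Finset.sum_attach D.support (fun s => h' s t), ← Finset.univ_eq_attach]
      refine Finset.sum_congr rfl fun s _ => ?_
      rw [hh'def]; dsimp only
      rw [dif_pos s.2, dif_pos ht]
    have hsumh' : ∀ (s : S) (hs : s ∈ D.support),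
        (∑ t ∈ E.support, h' s t) = ∑ t : {t // t ∈ E.support}, a (.inl (⟨s, hs⟩, t)) := by
      intro s hs
      rw [← Finset.sum_attach E.support (fun t => h' s t), ← Finset.univ_eq_attach]
      refine Finset.sum_congr rfl fun t _ => ?_
      rw [hh'def]; dsimp only
      rw [dif_pos hs, dif_pos t.2]
    have hconstE : ∀ t ∈ E.support, (∑ s ∈ D.support, h' s t) + z' t = E t := by
      intro t ht
      have hk := hfa' (.inr (.inl ⟨t, ht⟩))
      rw [cmap_apply_inr_inl] at hk
      rw [hsumh t ht]
      have hzz : z' t = a (.inr (.inr (.inl ⟨t, ht⟩))) := by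
        rw [hz'def]; dsimp only; rw [dif_pos ht]
      rw [hzz, hk]
      rfl
    have hconstD : ∀ s ∈ D.support, (∑ t ∈ E.support, h' s t) + w' s = D s := by
      intro s hs
      have hk := hfa' (.inl ⟨s, hs⟩)
      rw [cmap_apply_inl] at hk
      rw [hsumh' s hs]
      have hww : w' s = a (.inr (.inl ⟨s, hs⟩)) := by
        rw [hw'def]; dsimp only; rw [dif_pos hs]
      rw [hww, hk]
      rfl
    have hobj : (∑ s ∈ D.support, ∑ t ∈ E.support, h' s t * μ s t)
        + (∑ s ∈ D.support, w' s) + (∑ t ∈ E.support, z' t)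
        = (p - ε) - a (.inr (.inr (.inr ()))) := by
      have hk := hfa' (.inr (.inr ()))
      rw [cmap_apply_last] at hk
      have hb4 : b (Sum.inr (Sum.inr ())) = p - ε := rfl
      rw [hb4] at hk
      have e1 : ∑ s ∈ D.support, ∑ t ∈ E.support, h' s t * μ s t
          = ∑ q : {s // s ∈ D.support} × {t // t ∈ E.support}, μ q.1.1 q.2.1 * a (.inl q) := by
        rw [Fintype.sum_prod_type, ← Finset.sum_attach D.support, ← Finset.univ_eq_attach]
        refine Finset.sum_congr rfl fun s _ => ?_
        rw [← Finset.sum_attach E.support (fun t => h' s.1 t * μ s.1 t), ← Finset.univ_eq_attach]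
        refine Finset.sum_congr rfl fun t _ => ?_
        have : h' s.1 t.1 = a (.inl (s, t)) := by
          rw [hh'def]; dsimp only
          rw [dif_pos s.2, dif_pos t.2]
        rw [this, mul_comm]
      have e2 : ∑ s ∈ D.support, w' s
          = ∑ s : {s // s ∈ D.support}, a (.inr (.inl s)) := by
        rw [← Finset.sum_attach D.support w', ← Finset.univ_eq_attach]
        refine Finset.sum_congr rfl fun s _ => ?_
        rw [hw'def]; dsimp only
        rw [dif_pos s.2]
      have e3 : ∑ t ∈ E.support, z' t
          = ∑ t : {t // t ∈ E.support}, a (.inr (.inr (.inl t))) := by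
        rw [← Finset.sum_attach E.support z', ← Finset.univ_eq_attach]
        refine Finset.sum_congr rfl fun t _ => ?_
        rw [hz'def]; dsimp only
        rw [dif_pos t.2]
      rw [e1, e2, e3]
      linarith
    have hmemP : ((p - ε) - a (.inr (.inr (.inr ())))) ∈ primSet μ D E :=
      ⟨h', w', z', hh'nonneg, hw'nonneg, hz'nonneg, hconstE, hconstD, hobj.symm⟩
    have hple : p ≤ (p - ε) - a (.inr (.inr (.inr ()))) := csInf_le hbdd hmemP
    have hau := hapos (.inr (.inr (.inr ())))
    linarith
  -- Step B : separation gives a dual feasible point of value `> p - ε`.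
  obtain ⟨y, hy1, hy2⟩ := (posCone (Idx D E)).hyperplane_separation_of_notMem hbnot
  have hy1' : ∀ v : EuclideanSpace ℝ (Idx D E), (∀ i, 0 ≤ v i) → 0 ≤ ⟪cmap μ D E v, y⟫ := by
    intro v hv
    have h0 := (ProperCone.mem_innerDual).mp hy1 ((mem_posCone v).mpr hv)
    rwa [ContinuousLinearMap.adjoint_inner_right] at h0
  have hsingle : ∀ i : Idx D E, ∀ j, (0:ℝ) ≤ EuclideanSpace.single i (1:ℝ) j := by
    intro i j
    rw [EuclideanSpace.single_apply]
    split <;> norm_num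
  set lam := y (.inr (.inr ())) with hlamdef
  have h1 : ∀ q : {s // s ∈ D.support} × {t // t ∈ E.support},
      0 ≤ y (.inl q.1) + y (.inr (.inl q.2)) + lam * μ q.1.1 q.2.1 := by
    intro q
    have h0 := hy1' (EuclideanSpace.single (Sum.inl q) 1) (hsingle _)
    rwa [inner_cmap_single_h] at h0
  have h2 : ∀ s : {s // s ∈ D.support}, 0 ≤ y (.inl s) + lam := by
    intro s
    have h0 := hy1' (EuclideanSpace.single (Sum.inr (Sum.inl s)) 1) (hsingle _)
    rwa [inner_cmap_single_w] at h0
  have h3 : ∀ t : {t // t ∈ E.support}, 0 ≤ y (.inr (.inl t)) + lam := by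
    intro t
    have h0 := hy1' (EuclideanSpace.single (Sum.inr (Sum.inr (Sum.inl t))) 1) (hsingle _)
    rwa [inner_cmap_single_z] at h0
  have h4 : 0 ≤ lam := by
    have h0 := hy1' (EuclideanSpace.single (Sum.inr (Sum.inr (Sum.inr ()))) 1) (hsingle _)
    rwa [inner_cmap_single_u] at h0
  rw [real_inner_comm, inner_out] at hy2
  have hb1 : ∀ s, b (Sum.inl s) = D s.1 := fun s => rfl
  have hb2 : ∀ t, b (Sum.inr (Sum.inl t)) = E t.1 := fun t => rfl
  have hb3 : b (Sum.inr (Sum.inr ())) = p - ε := rfl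
  rw [hb3] at hy2
  simp only [hb1, hb2] at hy2
  set A := ∑ s : {s // s ∈ D.support}, y (.inl s) * D s.1 with hA
  set B := ∑ t : {t // t ∈ E.support}, y (.inr (.inl t)) * E t.1 with hB
  have hy2' : A + B + lam * (p - ε) < 0 := hy2
  rcases eq_or_lt_of_le h4 with hlam0 | hlampos
  · -- impossible : with `lam = 0` the separating functional is nonnegative on `b`
    exfalso
    have hA0 : 0 ≤ A :=
      Finset.sum_nonneg fun s _ => mul_nonneg (by linarith [h2 s]) (hD.1 s.1)
    have hB0 : 0 ≤ B :=
      Finset.sum_nonneg fun t _ => mul_nonneg (by linarith [h3 t]) (hE.1 t.1)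
    rw [← hlam0] at hy2'
    linarith
  · -- `lam > 0` : normalize to get a dual feasible point
    set a' : S → ℝ := fun s =>
      if hs : s ∈ D.support then -(y (.inl ⟨s, hs⟩)) / lam else -1 with ha'def
    set b' : S → ℝ := fun t =>
      if ht : t ∈ E.support then -(y (.inr (.inl ⟨t, ht⟩))) / lam else -1 with hb'def
    have ha'le : ∀ s, a' s ≤ 1 := by
      intro s; rw [ha'def]; dsimp only
      split
      · rename_i hs
        rw [div_le_one₀ hlampos]
        linarith [h2 ⟨s, hs⟩]
      · linarith
    have hb'le : ∀ t, b' t ≤ 1 := by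
      intro t; rw [hb'def]; dsimp only
      split
      · rename_i ht
        rw [div_le_one₀ hlampos]
        linarith [h3 ⟨t, ht⟩]
      · linarith
    have hab : ∀ s t, a' s + b' t ≤ μ s t := by
      intro s t
      by_cases hs : s ∈ D.support
      · by_cases ht : t ∈ E.support
        · rw [ha'def, hb'def]; dsimp only
          rw [dif_pos hs, dif_pos ht, ← add_div, div_le_iff₀ hlampos]
          have hq := h1 (⟨s, hs⟩, ⟨t, ht⟩)
          have hmc : lam * μ s t = μ s t * lam := mul_comm _ _
          dsimp only at hq
          linarith
        · rw [hb'def]; dsimp only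
          rw [dif_neg ht]
          linarith [ha'le s, hμ.1 s t]
      · rw [ha'def]; dsimp only
        rw [dif_neg hs]
        linarith [hb'le t, hμ.1 s t]
    have hvalD : D.sum (fun s p => a' s * p) = -(A / lam) := by
      rw [Finsupp.sum, ← Finset.sum_attach D.support (fun s => a' s * D s)]
      have : ∀ s : {s // s ∈ D.support},
          a' s.1 * D s.1 = -((y (.inl s) * D s.1) / lam) := by
        intro s
        rw [ha'def]; dsimp only
        rw [dif_pos s.2]
        rw [Subtype.coe_eta]
        ring
      rw [Finset.sum_congr rfl (fun s _ => this s)]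
      rw [hA, ← Finset.univ_eq_attach, Finset.sum_neg_distrib, Finset.sum_div]
    have hvalE : E.sum (fun t p => b' t * p) = -(B / lam) := by
      rw [Finsupp.sum, ← Finset.sum_attach E.support (fun t => b' t * E t)]
      have : ∀ t : {t // t ∈ E.support},
          b' t.1 * E t.1 = -((y (.inr (.inl t)) * E t.1) / lam) := by
        intro t
        rw [hb'def]; dsimp only
        rw [dif_pos t.2]
        rw [Subtype.coe_eta]
        ring
      rw [Finset.sum_congr rfl (fun t _ => this t)]
      rw [hB, ← Finset.univ_eq_attach, Finset.sum_neg_distrib, Finset.sum_div]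
    refine ⟨D.sum (fun s p => a' s * p) + E.sum (fun t p => b' t * p),
      ⟨a', b', ha'le, hb'le, hab, rfl⟩, ?_⟩
    rw [hvalD, hvalE]
    rw [show -(A / lam) + -(B / lam) = -(A + B) / lam by ring]
    rw [lt_div_iff₀ hlampos]
    have hmc : lam * (p - ε) = (p - ε) * lam := mul_comm _ _
    linarith

end LPDualAux

/-- strong LP duality for the Kantorovich lifting: the primal
minimum equals the dual maximum. -/
theorem lift_duality {S : Type*} (μ : S → S → ℝ) (hμ : IsPremetric μ)
    (D E : S →₀ ℝ) (hD : IsSubdist D) (hE : IsSubdist E) :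
    primLift μ D E = dualLift μ D E := by
  have hprim : primLift μ D E = sInf (LPDualAux.primSet μ D E) := rfl
  have hdual : dualLift μ D E = sSup (LPDualAux.dualSet μ D E) := rfl
  have hPne : (LPDualAux.primSet μ D E).Nonempty :=
    ⟨_, LPDualAux.prim_nonempty μ D E hD hE⟩
  have hDne : (LPDualAux.dualSet μ D E).Nonempty :=
    ⟨0, LPDualAux.dual_nonempty hμ D E⟩
  have hDbdd : BddAbove (LPDualAux.dualSet μ D E) :=
    ⟨_, fun r' hr' => LPDualAux.weak_duality (LPDualAux.prim_nonempty μ D E hD hE) hr'⟩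
  rw [hprim, hdual]
  apply le_antisymm
  · -- primal ≤ dual, via the approximate strong duality lemma
    refine le_of_forall_pos_le_add fun ε hε => ?_
    obtain ⟨r', hr'mem, hr'⟩ := LPDualAux.exists_dual_near μ D E hμ hD hE hε
    have : r' ≤ sSup (LPDualAux.dualSet μ D E) := le_csSup hDbdd hr'mem
    linarith
  · exact csSup_le hDne fun r' hr' =>
      le_csInf hPne fun r hr => LPDualAux.weak_duality hr hr'

end
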